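/- Let C and D be infinite atomic Boolean algebras, regarded as structures for the first-order language of Boolean algebras. Then a map g: C → D is an elementary embedding if and only if g is an embedding (an injective map preserving ∨, ∧, ¬, ⊥ and ⊤) that maps atoms to atoms. -/

import Mathlib

open FirstOrder Language Set

universe u v w x

namespace TeamSem

/-- A purely relational language consisting of `k` fresh relation symbols with
prescribed arities. -/
def relLang (k : ℕ) (ar : Fin k → ℕ) : FirstOrder.Language where
  Functions := fun _ => Empty
  Relations := fun n => {i : Fin k // ar i = n}

/-- Interpret the `k` fresh relation symbols by the given relations on `M`. -/
def relStructure {k : ℕ} {ar : Fin k → ℕ} {M : Type w}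
    (S : ∀ i : Fin k, Set (Fin (ar i) → M)) : (relLang k ar).Structure M where
  funMap := fun f _ => f.elim
  RelMap := fun R v => (fun j => v (Fin.cast R.2 j)) ∈ S R.1

/-- Satisfaction of a first-order sentence over `L` together with `k` fresh relation
symbols, in the expansion of `M` interpreting the fresh symbols by `S`. -/
def RealizeWith {L : FirstOrder.Language.{u, v}} (M : Type w) [L.Structure M] {k : ℕ} {ar : Fin k → ℕ}
    (φ : (L.sum (relLang k ar)).Sentence) (S : ∀ i : Fin k, Set (Fin (ar i) → M)) : Prop :=
  letI := relStructure S
  M ⊨ φ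

/-- An existential second-order sentence over `L`: finitely many fresh relation symbols
together with a first-order sentence over the enlarged language. -/
structure ESOSentence (L : FirstOrder.Language.{u, v}) where
  k : ℕ
  ar : Fin k → ℕ
  toSentence : (L.sum (relLang k ar)).Sentence

/-- Satisfaction of an existential second-order sentence. -/
def ESOSentence.Realize {L : FirstOrder.Language.{u, v}} (ψ : ESOSentence L) (M : Type w)
    [L.Structure M] : Prop :=
  ∃ S : ∀ i : Fin ψ.k, Set (Fin (ψ.ar i) → M), RealizeWith M ψ.toSentence S

/-- The Cartesian product of an `n`-ary and an `m`-ary relation. -/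
def teamProd {A : Type w} {n m : ℕ} (X : Set (Fin n → A)) (Y : Set (Fin m → A)) :
    Set (Fin (n + m) → A) :=
  {s | (fun i => s (Fin.castAdd m i)) ∈ X ∧ (fun j => s (Fin.natAdd n j)) ∈ Y}

/-- The generalized projection `Pr_ι` of an `n`-ary relation. -/
def teamProj {A : Type w} {n m : ℕ} (ι : Fin m → Fin n) (X : Set (Fin n → A)) :
    Set (Fin m → A) :=
  (fun b => b ∘ ι) '' X

/-- The diagonal (identity) relation on `A`. -/
def diag (A : Type w) : Set (Fin 2 → A) := {s | s 0 = s 1}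

/-- The interpretation of a relation symbol, as a set of tuples. -/
def relSet (L : FirstOrder.Language.{u, v}) (A : Type w) [L.Structure A] {n : ℕ} (R : L.Relations n) :
    Set (Fin n → A) :=
  {s | Structure.RelMap R s}

/-- The graph of the interpretation of a function symbol, as a set of tuples. -/
def funGraph (L : FirstOrder.Language.{u, v}) (A : Type w) [L.Structure A] {n : ℕ} (F : L.Functions n) :
    Set (Fin (n + 1) → A) :=
  {s | Structure.funMap F (fun i => s i.castSucc) = s (Fin.last n)}

/-- A family of relations on `A` that is closed under the operations generating the
closure `cl`; a family `𝒴` satisfies `𝒴 = cl(𝒴)` precisely when it is closed. -/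
structure IsClosedFamily (L : FirstOrder.Language.{u, v}) (A : Type w) [L.Structure A]
    (𝒴 : ∀ n : ℕ, Set (Set (Fin n → A))) : Prop where
  empty_mem : ∀ n, (∅ : Set (Fin n → A)) ∈ 𝒴 n
  univ_mem : ∀ n, (Set.univ : Set (Fin n → A)) ∈ 𝒴 n
  inter_mem : ∀ (n : ℕ) (X Y : Set (Fin n → A)), X ∈ 𝒴 n → Y ∈ 𝒴 n → X ∩ Y ∈ 𝒴 n
  prod_mem : ∀ (n m : ℕ) (X : Set (Fin n → A)) (Y : Set (Fin m → A)),
    X ∈ 𝒴 n → Y ∈ 𝒴 m → teamProd X Y ∈ 𝒴 (n + m)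
  proj_mem : ∀ (n m : ℕ) (ι : Fin m → Fin n) (X : Set (Fin n → A)),
    X ∈ 𝒴 n → teamProj ι X ∈ 𝒴 m
  diag_mem : diag A ∈ 𝒴 2
  rel_mem : ∀ (n : ℕ) (R : L.Relations n), relSet L A R ∈ 𝒴 n
  graph_mem : ∀ (n : ℕ) (F : L.Functions n), funGraph L A F ∈ 𝒴 (n + 1)

/-- A partial team map from `A` to `B`.  Arities are preserved by typing; the domain
and the range are closed families (equivalently, `dom f = cl(dom f)` and
`ran f = cl(ran f)`); the empty relation of each arity is mapped to the empty relation
(in the untyped setting this is automatic for arity-preserving maps). -/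
structure PartialTeamMap (L : FirstOrder.Language.{u, v}) (A : Type w) (B : Type x)
    [L.Structure A] [L.Structure B] where
  dom : ∀ n : ℕ, Set (Set (Fin n → A))
  toFun : ∀ n : ℕ, Set (Fin n → A) → Set (Fin n → B)
  dom_closed : IsClosedFamily L A dom
  ran_closed : IsClosedFamily L B fun n => toFun n '' dom n
  map_empty : ∀ n, toFun n (∅ : Set (Fin n → A)) = ∅

namespace PartialTeamMap

variable {L : FirstOrder.Language.{u, v}} {A : Type w} {B : Type x} [L.Structure A] [L.Structure B]

/-- The range family of a partial team map. -/
def ran (f : PartialTeamMap L A B) : ∀ n : ℕ, Set (Set (Fin n → B)) :=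
  fun n => f.toFun n '' f.dom n

/-- Conditions (PI1)–(PI6): `f` is a partial team isomorphism. -/
structure IsIso (f : PartialTeamMap L A B) : Prop where
  empty_iff : ∀ (n : ℕ) (X : Set (Fin n → A)), X ∈ f.dom n → (X = ∅ ↔ f.toFun n X = ∅)
  univ_iff : ∀ (n : ℕ) (X : Set (Fin n → A)), X ∈ f.dom n →
    (X = Set.univ ↔ f.toFun n X = Set.univ)
  singleton_iff : ∀ (n : ℕ) (X : Set (Fin n → A)), X ∈ f.dom n →
    ((∃ s, X = {s}) ↔ ∃ t, f.toFun n X = {t})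
  map_prod : ∀ (n m : ℕ) (X : Set (Fin n → A)) (Y : Set (Fin m → A)),
    X ∈ f.dom n → Y ∈ f.dom m →
    f.toFun (n + m) (teamProd X Y) = teamProd (f.toFun n X) (f.toFun m Y)
  map_proj : ∀ (n m : ℕ) (ι : Fin m → Fin n) (X : Set (Fin n → A)), X ∈ f.dom n →
    f.toFun m (teamProj ι X) = teamProj ι (f.toFun n X)
  subset_iff : ∀ (n : ℕ) (X Y : Set (Fin n → A)), X ∈ f.dom n → Y ∈ f.dom n →
    (X ⊆ Y ↔ f.toFun n X ⊆ f.toFun n Y)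
  map_diag : f.toFun 2 (diag A) = diag B
  map_rel : ∀ (n : ℕ) (R : L.Relations n), f.toFun n (relSet L A R) = relSet L B R
  map_graph : ∀ (n : ℕ) (F : L.Functions n), f.toFun (n + 1) (funGraph L A F) = funGraph L B F

/-- `f` is a partial elementary team map: it preserves (in both directions) all
first-order sentences over `L` augmented by fresh relation symbols interpreted by
nonempty relations from the domain of `f`. -/
def IsElementary (f : PartialTeamMap L A B) : Prop :=
  ∀ (k : ℕ) (ar : Fin k → ℕ) (φ : (L.sum (relLang k ar)).Sentence)
    (X : ∀ i : Fin k, Set (Fin (ar i) → A)),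
    (∀ i, X i ∈ f.dom (ar i)) → (∀ i, (X i).Nonempty) →
    (RealizeWith A φ X ↔ RealizeWith B φ fun i => f.toFun (ar i) (X i))

/-- `f` is total: its domain consists of all relations on `A`. -/
def Total (f : PartialTeamMap L A B) : Prop := ∀ n, f.dom n = Set.univ

/-- Every singleton `{a}`, `a : A`, of arity 1 is in the domain of `f`. -/
def ElementTotal (f : PartialTeamMap L A B) : Prop :=
  ∀ a : A, ({fun _ => a} : Set (Fin 1 → A)) ∈ f.dom 1

/-- Every singleton `{b}`, `b : B`, of arity 1 is in the range of `f`. -/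
def ElementSurjective (f : PartialTeamMap L A B) : Prop :=
  ∀ b : B, ({fun _ => b} : Set (Fin 1 → B)) ∈ f.ran 1

end PartialTeamMap

end TeamSem

namespace TeamSem

/-- The first-order language of Boolean algebras: two constant symbols `⊥, ⊤`, one
unary function symbol `¬`, and two binary function symbols `∨, ∧`. -/
def boolLang : FirstOrder.Language where
  Functions
    | 0 => Bool
    | 1 => Unit
    | 2 => Bool
    | _ + 3 => Empty
  Relations := fun _ => Empty

/-- A Boolean algebra regarded as a structure for the language of Boolean algebras
in the obvious way. -/
instance boolStructure (α : Type w) [BooleanAlgebra α] : boolLang.Structure α where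
  funMap {n} :=
    match n with
    | 0 => fun b _ => bif b then ⊤ else ⊥
    | 1 => fun _ v => (v 0)ᶜ
    | 2 => fun b v => bif b then v 0 ⊔ v 1 else v 0 ⊓ v 1
    | _ + 3 => fun e _ => e.elim
  RelMap := fun r _ => r.elim

section AuxEF

section Atoms

variable {α : Type*} [BooleanAlgebra α]

/-- `c` has at least `m` atoms below it. -/
def atLe (m : ℕ) (c : α) : Prop :=
  ∃ s : Finset α, s.card = m ∧ ∀ a ∈ s, IsAtom a ∧ a ≤ c

lemma atLe_zero (c : α) : atLe 0 c := ⟨∅, by simp⟩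

lemma atLe.mono_le {m : ℕ} {c c' : α} (h : c ≤ c') : atLe m c → atLe m c' := by
  rintro ⟨s, hcard, hs⟩
  exact ⟨s, hcard, fun a ha => ⟨(hs a ha).1, (hs a ha).2.trans h⟩⟩

lemma atLe.anti {m m' : ℕ} {c : α} (h : m' ≤ m) : atLe m c → atLe m' c := by
  rintro ⟨s, hcard, hs⟩
  obtain ⟨t, hts, htcard⟩ := Finset.exists_subset_card_eq (hcard ▸ h)
  exact ⟨t, htcard, fun a ha => hs a (hts ha)⟩

lemma atLe_one_iff [IsAtomic α] {c : α} : atLe 1 c ↔ c ≠ ⊥ := by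
  constructor
  · rintro ⟨s, hcard, hs⟩ rfl
    obtain ⟨a, ha⟩ := Finset.card_eq_one.1 hcard
    have := hs a (by simp [ha])
    exact this.1.1 (le_bot_iff.1 this.2)
  · intro hc
    obtain ⟨a, ha, hle⟩ := (IsAtomic.eq_bot_or_exists_atom_le c).resolve_left hc
    exact ⟨{a}, by simp, by simp [ha, hle]⟩

lemma atom_le_or_le_compl {a : α} (ha : IsAtom a) (u : α) : a ≤ u ∨ a ≤ uᶜ := by
  rcases eq_or_lt_of_le (inf_le_left : a ⊓ u ≤ a) with h | h
  · exact Or.inl (inf_eq_left.1 h)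
  · exact Or.inr (disjoint_iff.2 (ha.2 _ h)).le_compl_right

lemma atLe_sup {u v : α} (hd : Disjoint u v) {m p : ℕ}
    (hu : atLe m u) (hv : atLe p v) : atLe (m + p) (u ⊔ v) := by
  classical
  obtain ⟨s, hscard, hs⟩ := hu
  obtain ⟨t, htcard, ht⟩ := hv
  have hst : Disjoint s t := by
    rw [Finset.disjoint_left]
    intro a has hat
    exact (hs a has).1.1 (le_bot_iff.1 (hd (hs a has).2 (ht a hat).2))
  refine ⟨s ∪ t, ?_, ?_⟩
  · rw [Finset.card_union_of_disjoint hst, hscard, htcard]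
  · intro a ha
    rcases Finset.mem_union.1 ha with h | h
    · exact ⟨(hs a h).1, (hs a h).2.trans le_sup_left⟩
    · exact ⟨(ht a h).1, (ht a h).2.trans le_sup_right⟩

lemma atLe_split {c u : α} {m p : ℕ} (h : atLe (m + p) c)
    (hcap : ¬ atLe (p + 1) (c ⊓ u)) : atLe m (c ⊓ uᶜ) := by
  classical
  obtain ⟨s, hscard, hs⟩ := h
  set t₁ := s.filter (fun a => a ≤ u) with ht₁
  set t₂ := s.filter (fun a => ¬ a ≤ u) with ht₂
  have hcard₁ : t₁.card ≤ p := by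
    by_contra hgt
    push_neg at hgt
    obtain ⟨t, hts, htcard⟩ := Finset.exists_subset_card_eq hgt
    refine hcap ⟨t, htcard, fun a ha => ?_⟩
    have has := hts ha
    have hmem := Finset.mem_filter.1 has
    exact ⟨(hs a hmem.1).1, le_inf (hs a hmem.1).2 hmem.2⟩
  have hsum : t₁.card + t₂.card = m + p :=
    hscard ▸ Finset.card_filter_add_card_filter_not (p := fun a => a ≤ u)
  have hcard₂ : m ≤ t₂.card := by omega
  obtain ⟨t, hts, htcard⟩ := Finset.exists_subset_card_eq hcard₂
  refine ⟨t, htcard, fun a ha => ?_⟩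
  have hmem := Finset.mem_filter.1 (hts ha)
  have hatom := (hs a hmem.1).1
  refine ⟨hatom, le_inf (hs a hmem.1).2 ?_⟩
  exact (atom_le_or_le_compl hatom u).resolve_left hmem.2

lemma atom_mem_of_le_sup {s : Finset α} (hs : ∀ b ∈ s, IsAtom b) {a : α}
    (ha : IsAtom a) (h : a ≤ s.sup id) : a ∈ s := by
  by_contra hmem
  have hbot : ∀ b ∈ s, a ⊓ id b = ⊥ := by
    intro b hb
    rcases ((hs b hb).le_iff.1 (inf_le_right : a ⊓ b ≤ b)) with h' | h'
    · exact h'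
    · exfalso
      have hba : b ≤ a := by rw [← h']; exact inf_le_left
      rcases ha.le_iff.1 hba with h'' | h''
      · exact (hs b hb).1 h''
      · exact hmem (h'' ▸ hb)
  have : a ⊓ s.sup id = ⊥ := by
    rw [Finset.sup_inf_distrib_left]
    exact (Finset.sup_eq_bot_iff _ _).2 hbot
  exact ha.1 (by rw [← inf_eq_left.2 h, this])

lemma chooseFinite {c : α} {k : ℕ} (h : atLe k c) :
    ∃ u, u ≤ c ∧ (∀ m, atLe m u ↔ m ≤ k) ∧
      (∀ m, atLe m (c ⊓ uᶜ) ↔ atLe (m + k) c) := by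
  classical
  obtain ⟨s, hscard, hs⟩ := h
  have hatoms : ∀ b ∈ s, IsAtom b := fun b hb => (hs b hb).1
  have hsupc : s.sup id ≤ c := Finset.sup_le fun b hb => (hs b hb).2
  have hsupat : atLe k (s.sup id) :=
    ⟨s, hscard, fun b hb => ⟨(hs b hb).1, Finset.le_sup (f := id) hb⟩⟩
  refine ⟨s.sup id, hsupc, fun m => ⟨?_, fun hm => hsupat.anti hm⟩, fun m => ⟨?_, ?_⟩⟩
  · rintro ⟨t, htcard, ht⟩
    have hts : t ⊆ s := fun a ha => atom_mem_of_le_sup hatoms (ht a ha).1 (ht a ha).2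
    exact htcard ▸ hscard ▸ Finset.card_le_card hts
  · rintro ⟨t, htcard, ht⟩
    have hst : Disjoint t s := by
      rw [Finset.disjoint_left]
      intro a hat has
      have h1 : a ≤ (s.sup id)ᶜ := (ht a hat).2.trans inf_le_right
      have h2 : a ≤ s.sup id := Finset.le_sup (f := id) has
      exact (ht a hat).1.1 (le_bot_iff.1 ((le_inf h2 h1).trans inf_compl_eq_bot.le))
    refine ⟨t ∪ s, ?_, fun a ha => ?_⟩
    · rw [Finset.card_union_of_disjoint hst, htcard, hscard]
    · rcases Finset.mem_union.1 ha with h' | h'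
      · exact ⟨(ht a h').1, (ht a h').2.trans inf_le_left⟩
      · exact ⟨(hs a h').1, (hs a h').2⟩
  · intro hmk
    refine atLe_split (u := s.sup id) hmk ?_
    rintro ⟨t, htcard, ht⟩
    have hts : t ⊆ s := fun a ha =>
      atom_mem_of_le_sup hatoms (ht a ha).1 ((ht a ha).2.trans inf_le_right)
    have := Finset.card_le_card hts
    omega

end Atoms

section Cells

variable {α : Type*} [BooleanAlgebra α]

/-- The cell of a tuple `x` determined by a sign pattern `ε`. -/
def cell {k : ℕ} (x : Fin k → α) (ε : Fin k → Bool) : α :=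
  Finset.univ.inf fun i => cond (ε i) (x i) (x i)ᶜ

lemma cell_le {k : ℕ} (x : Fin k → α) (ε : Fin k → Bool) (i : Fin k) :
    cell x ε ≤ cond (ε i) (x i) (x i)ᶜ :=
  Finset.inf_le (Finset.mem_univ i)

lemma cell_disjoint {k : ℕ} (x : Fin k → α) {ε ε' : Fin k → Bool} (h : ε ≠ ε') :
    Disjoint (cell x ε) (cell x ε') := by
  obtain ⟨i, hi⟩ := Function.ne_iff.1 h
  have h1 := cell_le x ε i
  have h2 := cell_le x ε' i
  cases hb : ε i
  · rw [hb] at h1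
    rw [(by revert hi; cases ε' i <;> simp [hb] : ε' i = true)] at h2
    exact Disjoint.mono h1 h2 disjoint_compl_left
  · rw [hb] at h1
    rw [(by revert hi; cases ε' i <;> simp [hb] : ε' i = false)] at h2
    exact Disjoint.mono h1 h2 disjoint_compl_right

lemma cell_snoc {k : ℕ} (x : Fin k → α) (c : α) (ε : Fin (k + 1) → Bool) :
    cell (Fin.snoc x c) ε =
      cell x (ε ∘ Fin.castSucc) ⊓ cond (ε (Fin.last k)) c cᶜ := by
  unfold cell
  rw [Fin.univ_castSuccEmb, Finset.inf_cons, Finset.inf_map, inf_comm]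
  congr 1
  · apply Finset.inf_congr rfl
    intro i _
    simp only [Function.comp_apply, Fin.coe_castSuccEmb, Fin.snoc_castSucc]
  · simp [Fin.snoc_last]

lemma atom_le_cell {k : ℕ} {x : Fin k → α} {a : α} (ha : IsAtom a)
    (ε : Fin k → Bool) (hε : ∀ i, ε i = true ↔ a ≤ x i) : a ≤ cell x ε := by
  refine Finset.le_inf fun i _ => ?_
  cases h : ε i <;> simp only [cond]
  · refine (atom_le_or_le_compl ha (x i)).resolve_left fun hle => ?_
    rw [(hε i).2 hle] at h
    exact Bool.noConfusion h
  · exact (hε i).1 h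

lemma eq_of_atoms [IsAtomic α] {u v : α}
    (h : ∀ a : α, IsAtom a → (a ≤ u ↔ a ≤ v)) : u = v := by
  have key : ∀ u v : α, (∀ a : α, IsAtom a → a ≤ u → a ≤ v) → u ≤ v := by
    intro u v huv
    by_contra hle
    have hne : u ⊓ vᶜ ≠ ⊥ := by
      intro hb
      exact hle (compl_compl v ▸ (disjoint_iff.2 hb).le_compl_right)
    obtain ⟨a, ha, hle'⟩ := (IsAtomic.eq_bot_or_exists_atom_le (u ⊓ vᶜ)).resolve_left hne
    have h1 : a ≤ v := huv a ha (hle'.trans inf_le_left)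
    have h2 : a ≤ vᶜ := hle'.trans inf_le_right
    exact ha.1 (le_bot_iff.1 ((le_inf h1 h2).trans inf_compl_eq_bot.le))
  exact le_antisymm (key u v fun a ha => (h a ha).1) (key v u fun a ha => (h a ha).2)

end Cells

end AuxEF

section BoolTerms

/-- The sup function symbol. -/
abbrev supF : boolLang.Functions 2 := true
/-- The inf function symbol. -/
abbrev infF : boolLang.Functions 2 := false
/-- The complement function symbol. -/
abbrev complF : boolLang.Functions 1 := Unit.unit
/-- The bottom constant symbol. -/
abbrev botF : boolLang.Functions 0 := false
/-- The top constant symbol. -/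
abbrev topF : boolLang.Functions 0 := true

variable {β : Type*} [BooleanAlgebra β]

@[simp] lemma funMap_botF (v : Fin 0 → β) :
    Structure.funMap (L := boolLang) (show boolLang.Functions 0 from false) v = ⊥ := rfl

@[simp] lemma funMap_topF (v : Fin 0 → β) :
    Structure.funMap (L := boolLang) (show boolLang.Functions 0 from true) v = ⊤ := rfl

@[simp] lemma funMap_complF (u : Unit) (v : Fin 1 → β) :
    Structure.funMap (L := boolLang) (show boolLang.Functions 1 from u) v = (v 0)ᶜ := rfl

@[simp] lemma funMap_infF (v : Fin 2 → β) :
    Structure.funMap (L := boolLang) (show boolLang.Functions 2 from false) v = v 0 ⊓ v 1 := rfl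

@[simp] lemma funMap_supF (v : Fin 2 → β) :
    Structure.funMap (L := boolLang) (show boolLang.Functions 2 from true) v = v 0 ⊔ v 1 := rfl

lemma term_cell {k : ℕ} (t : boolLang.Term (Fin k)) (x : Fin k → β) (ε : Fin k → Bool) :
    cell x ε ⊓ t.realize x = cond (t.realize ε) (cell x ε) ⊥ := by
  induction t with
  | var i =>
    simp only [Term.realize_var]
    have h := cell_le x ε i
    cases hb : ε i
    · rw [hb] at h
      simp only [cond]
      exact le_bot_iff.1 ((inf_le_inf_right (x i) h).trans compl_inf_eq_bot.le)
    · rw [hb] at h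
      simp only [cond]
      exact inf_eq_left.2 h
  | @func l f ts ih =>
    match l, f with
    | 0, f =>
      cases f
      · show cell x ε ⊓ ⊥ = ⊥
        simp
      · show cell x ε ⊓ ⊤ = cell x ε
        simp
    | 1, f =>
      cases f
      have ih0 := ih 0
      show cell x ε ⊓ (Term.realize x (ts 0))ᶜ = cond (Term.realize (fun i => ε i) (ts 0))ᶜ (cell x ε) ⊥
      cases hb : Term.realize (fun i => ε i) (ts 0)
      · rw [hb] at ih0
        simp only [cond] at ih0
        have hle : cell x ε ≤ (Term.realize x (ts 0))ᶜ := (disjoint_iff.2 ih0).le_compl_right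
        show cell x ε ⊓ (Term.realize x (ts 0))ᶜ = cond ((false : Bool))ᶜ (cell x ε) ⊥
        rw [show ((false : Bool))ᶜ = true from rfl]
        exact inf_eq_left.2 hle
      · rw [hb] at ih0
        simp only [cond] at ih0
        have hle : cell x ε ≤ Term.realize x (ts 0) := inf_eq_left.1 ih0
        show cell x ε ⊓ (Term.realize x (ts 0))ᶜ = cond ((true : Bool))ᶜ (cell x ε) ⊥
        rw [show ((true : Bool))ᶜ = false from rfl]
        exact le_bot_iff.1 ((inf_le_inf_right _ hle).trans
          (by rw [inf_comm]; exact compl_inf_eq_bot.le))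
    | 2, f =>
      have ih0 := ih 0
      have ih1 := ih 1
      cases f
      · -- inf
        show cell x ε ⊓ (Term.realize x (ts 0) ⊓ Term.realize x (ts 1)) =
          cond (Term.realize (fun i => ε i) (ts 0) ⊓ Term.realize (fun i => ε i) (ts 1)) (cell x ε) ⊥
        rw [inf_inf_distrib_left, ih0, ih1]
        cases hb0 : Term.realize (fun i => ε i) (ts 0) <;>
          cases hb1 : Term.realize (fun i => ε i) (ts 1) <;>
            rw [hb0] at ih0 <;> rw [hb1] at ih1 <;> simp
      · -- sup
        show cell x ε ⊓ (Term.realize x (ts 0) ⊔ Term.realize x (ts 1)) =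
          cond (Term.realize (fun i => ε i) (ts 0) ⊔ Term.realize (fun i => ε i) (ts 1)) (cell x ε) ⊥
        rw [inf_sup_left, ih0, ih1]
        cases hb0 : Term.realize (fun i => ε i) (ts 0) <;>
          cases hb1 : Term.realize (fun i => ε i) (ts 1) <;> simp
    | (l + 3), f => exact Empty.elim f

lemma term_eq_iff [IsAtomic β] {k : ℕ} (t₁ t₂ : boolLang.Term (Fin k)) (x : Fin k → β) :
    t₁.realize x = t₂.realize x ↔
      ∀ ε : Fin k → Bool,
        (t₁.realize ε : Bool) ≠ t₂.realize ε → cell x ε = ⊥ := by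
  constructor
  · intro h ε hne
    have h1 := term_cell t₁ x ε
    have h2 := term_cell t₂ x ε
    rw [h] at h1
    rw [h1] at h2
    cases hb1 : (t₁.realize ε : Bool) <;> cases hb2 : (t₂.realize ε : Bool) <;>
      rw [hb1, hb2] at h2 <;> simp only [cond] at h2
    · exact absurd rfl (hb1 ▸ hb2 ▸ hne)
    · exact h2.symm
    · exact h2
    · exact absurd rfl (hb1 ▸ hb2 ▸ hne)
  · intro h
    classical
    apply eq_of_atoms
    intro a ha
    set ε : Fin k → Bool := fun i => decide (a ≤ x i) with hε
    have hcell : a ≤ cell x ε := atom_le_cell ha ε (fun i => by simp [hε])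
    have hkey : ∀ t : boolLang.Term (Fin k),
        (a ≤ t.realize x ↔ (t.realize ε : Bool) = true) := by
      intro t
      have ht := term_cell t x ε
      cases hb : (t.realize ε : Bool)
      · rw [hb] at ht
        simp only [cond] at ht
        constructor
        · intro hle
          exact absurd (le_bot_iff.1 ((le_inf hcell hle).trans ht.le)) ha.1
        · intro hfalse; exact absurd hfalse (by simp)
      · rw [hb] at ht
        simp only [cond] at ht
        exact ⟨fun _ => rfl, fun _ => hcell.trans (inf_eq_left.1 ht)⟩
    have hb : (t₁.realize ε : Bool) = t₂.realize ε := by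
      by_contra hne
      exact ha.1 (le_bot_iff.1 (h ε hne ▸ hcell))
    rw [hkey t₁, hkey t₂, hb]

end BoolTerms

section EqvAt

variable {C : Type*} {D : Type*} [BooleanAlgebra C] [BooleanAlgebra D]

/-- Two tuples are `N`-equivalent if corresponding cells have the same number of atoms
below them, up to threshold `N`. -/
def EqvAt (N : ℕ) {k : ℕ} (x : Fin k → C) (y : Fin k → D) : Prop :=
  ∀ ε : Fin k → Bool, ∀ m ≤ N, (atLe m (cell x ε) ↔ atLe m (cell y ε))

lemma EqvAt.symm {N k} {x : Fin k → C} {y : Fin k → D} (h : EqvAt N x y) : EqvAt N y x :=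
  fun ε m hm => (h ε m hm).symm

lemma EqvAt.mono {N M k} {x : Fin k → C} {y : Fin k → D} (h : EqvAt N x y) (hle : M ≤ N) :
    EqvAt M x y := fun ε m hm => h ε m (hm.trans hle)

lemma split_aux {N : ℕ} {cC : C} {cD : D}
    (h : ∀ m ≤ 2 * N + 2, (atLe m cC ↔ atLe m cD)) (c : C) :
    ∃ u, u ≤ cD ∧ (∀ m ≤ N, (atLe m (cC ⊓ c) ↔ atLe m u)) ∧
      (∀ m ≤ N, (atLe m (cC ⊓ cᶜ) ↔ atLe m (cD ⊓ uᶜ))) := by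
  classical
  have hdisj : Disjoint (cC ⊓ c) (cC ⊓ cᶜ) :=
    Disjoint.mono inf_le_right inf_le_right disjoint_compl_right
  have hsup : (cC ⊓ c) ⊔ (cC ⊓ cᶜ) = cC := by
    rw [← inf_sup_left, sup_compl_eq_top, inf_top_eq]
  have hunion : ∀ {m p : ℕ}, atLe m (cC ⊓ c) → atLe p (cC ⊓ cᶜ) → atLe (m + p) cC :=
    fun hm hp => hsup ▸ atLe_sup hdisj hm hp
  have hsplit1 : ∀ {m p : ℕ}, atLe (m + p) cC → ¬ atLe (p + 1) (cC ⊓ c) → atLe m (cC ⊓ cᶜ) :=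
    fun hmp hcap => atLe_split hmp hcap
  have hsplit2 : ∀ {m p : ℕ}, atLe (m + p) cC → ¬ atLe (p + 1) (cC ⊓ cᶜ) → atLe m (cC ⊓ c) := by
    intro m p hmp hcap
    have := atLe_split (u := cᶜ) hmp hcap
    rwa [_root_.compl_compl] at this
  obtain ⟨p, hple, hp, hps'⟩ :
      ∃ p, p ≤ N + 1 ∧ atLe p (cC ⊓ c) ∧ (p < N + 1 → ¬ atLe (p + 1) (cC ⊓ c)) :=
    ⟨Nat.findGreatest (fun m => atLe m (cC ⊓ c)) (N + 1), Nat.findGreatest_le _,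
      Nat.findGreatest_spec (P := fun m => atLe m (cC ⊓ c)) (Nat.zero_le _) (atLe_zero _),
      fun hlt => Nat.findGreatest_is_greatest (Nat.lt_succ_self _) hlt⟩
  obtain ⟨q, hqle, hq, hqs'⟩ :
      ∃ q, q ≤ N + 1 ∧ atLe q (cC ⊓ cᶜ) ∧ (q < N + 1 → ¬ atLe (q + 1) (cC ⊓ cᶜ)) :=
    ⟨Nat.findGreatest (fun m => atLe m (cC ⊓ cᶜ)) (N + 1), Nat.findGreatest_le _,
      Nat.findGreatest_spec (P := fun m => atLe m (cC ⊓ cᶜ)) (Nat.zero_le _) (atLe_zero _),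
      fun hlt => Nat.findGreatest_is_greatest (Nat.lt_succ_self _) hlt⟩
  by_cases hpN : p ≤ N
  · have hps : ¬ atLe (p + 1) (cC ⊓ c) := hps' (by omega)
    have hcD : atLe p cD := (h p (by omega)).1 (hp.mono_le inf_le_left)
    obtain ⟨u, hule, hu1, hu2⟩ := chooseFinite hcD
    refine ⟨u, hule, fun m hm => ?_, fun m hm => ?_⟩
    · rw [hu1 m]
      constructor
      · intro h1
        by_contra hmp
        push_neg at hmp
        exact hps (h1.anti (by omega))
      · intro hmp
        exact hp.anti hmp
    · rw [hu2 m, ← h (m + p) (by omega)]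
      constructor
      · intro h2
        have := hunion hp h2
        rwa [Nat.add_comm] at this
      · intro hmp
        exact hsplit1 hmp hps
  · by_cases hqN : q ≤ N
    · have hqs : ¬ atLe (q + 1) (cC ⊓ cᶜ) := hqs' (by omega)
      have hcD : atLe q cD := (h q (by omega)).1 (hq.mono_le inf_le_left)
      obtain ⟨u₀, hule, hu1, hu2⟩ := chooseFinite hcD
      refine ⟨cD ⊓ u₀ᶜ, inf_le_left, fun m hm => ?_, fun m hm => ?_⟩
      · rw [hu2 m, ← h (m + q) (by omega)]
        constructor
        · intro h1
          exact hunion h1 hq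
        · intro hmq
          exact hsplit2 hmq hqs
      · have hrw : cD ⊓ (cD ⊓ u₀ᶜ)ᶜ = u₀ := by
          rw [compl_inf, _root_.compl_compl, inf_sup_left, inf_compl_eq_bot, bot_sup_eq,
            inf_eq_right.2 hule]
        rw [hrw, hu1 m]
        constructor
        · intro h2
          by_contra hc
          push_neg at hc
          exact hqs (h2.anti (by omega))
        · intro hmq'
          exact hq.anti hmq'
    · have hpeq : p = N + 1 := by omega
      have hqeq : q = N + 1 := by omega
      have hp' : atLe (N + 1) (cC ⊓ c) := hpeq ▸ hp
      have hq' : atLe (N + 1) (cC ⊓ cᶜ) := hqeq ▸ hq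
      have hbig : atLe (2 * N + 2) cC := by
        have := hunion hp' hq'
        rwa [show (N + 1) + (N + 1) = 2 * N + 2 by omega] at this
      have hcD : atLe (2 * N + 2) cD := (h _ le_rfl).1 hbig
      obtain ⟨u, hule, hu1, hu2⟩ := chooseFinite (hcD.anti (by omega : N + 1 ≤ 2 * N + 2))
      refine ⟨u, hule, fun m hm => ?_, fun m hm => ?_⟩
      · exact iff_of_true (hp'.anti (by omega)) ((hu1 m).2 (by omega))
      · exact iff_of_true (hq'.anti (by omega)) ((hu2 m).2 (hcD.anti (by omega)))

lemma ext_lemma {k N : ℕ} {x : Fin k → C} {y : Fin k → D}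
    (h : EqvAt (2 * N + 2) x y) (c : C) :
    ∃ d : D, EqvAt N (Fin.snoc x c) (Fin.snoc y d) := by
  classical
  choose u hle h1 h2 using fun ε : Fin k → Bool => split_aux (fun m hm => h ε m hm) c
  refine ⟨Finset.univ.sup u, ?_⟩
  intro ε' m hm
  have hεd : cell y (ε' ∘ Fin.castSucc) ⊓ Finset.univ.sup u = u (ε' ∘ Fin.castSucc) := by
    rw [Finset.sup_inf_distrib_left]
    apply le_antisymm
    · apply Finset.sup_le
      intro ε'' _
      by_cases hE : ε'' = ε' ∘ Fin.castSucc
      · rw [hE]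
        exact inf_le_right
      · have hd := cell_disjoint y (fun hEq => hE hEq.symm)
        exact le_trans (inf_le_inf_left _ (hle ε'')) (hd.le_bot.trans bot_le)
    · exact le_trans (le_inf (hle _) le_rfl)
        (Finset.le_sup (f := fun ε'' => cell y (ε' ∘ Fin.castSucc) ⊓ u ε'')
          (Finset.mem_univ (ε' ∘ Fin.castSucc)))
  have hεdc : cell y (ε' ∘ Fin.castSucc) ⊓ (Finset.univ.sup u)ᶜ =
      cell y (ε' ∘ Fin.castSucc) ⊓ (u (ε' ∘ Fin.castSucc))ᶜ := by
    apply le_antisymm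
    · exact inf_le_inf_left _ (compl_le_compl (Finset.le_sup (Finset.mem_univ _)))
    · have hbot : (cell y (ε' ∘ Fin.castSucc) ⊓ (u (ε' ∘ Fin.castSucc))ᶜ) ⊓
          Finset.univ.sup u = ⊥ := by
        rw [inf_right_comm, hεd]
        exact inf_compl_eq_bot
      exact le_inf inf_le_left ((disjoint_iff.2 hbot).le_compl_right)
  rw [cell_snoc, cell_snoc]
  cases hb : ε' (Fin.last k)
  · simp only [cond]
    have hrw : cell x (ε' ∘ Fin.castSucc) ⊓ cᶜ = cell x (ε' ∘ Fin.castSucc) ⊓ cᶜ := rfl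
    rw [show cell y (ε' ∘ Fin.castSucc) ⊓ (Finset.univ.sup u)ᶜ =
        cell y (ε' ∘ Fin.castSucc) ⊓ (u (ε' ∘ Fin.castSucc))ᶜ from hεdc]
    exact h2 (ε' ∘ Fin.castSucc) m hm
  · simp only [cond]
    rw [hεd]
    exact h1 (ε' ∘ Fin.castSucc) m hm

end EqvAt

section MainTransfer

lemma realize_sum_elim {β : Type*} [BooleanAlgebra β] {n : ℕ} (z : Fin n → β)
    (t : boolLang.Term (Empty ⊕ Fin n)) :
    t.realize (Sum.elim (fun e => Empty.elim e) z) =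
      (t.relabel (Sum.elim (fun e => Empty.elim e) id)).realize z := by
  rw [Term.realize_relabel]
  congr 1
  funext a
  rcases a with e | i
  · exact e.elim
  · rfl

theorem main_transfer {C : Type*} {D : Type*} [BooleanAlgebra C] [BooleanAlgebra D]
    [IsAtomic C] [IsAtomic D] :
    ∀ {n : ℕ} (φ : boolLang.BoundedFormula Empty n), ∃ N : ℕ,
      ∀ (x : Fin n → C) (y : Fin n → D), EqvAt N x y →
        ((φ.Realize (fun e => Empty.elim e) x) ↔ (φ.Realize (fun e => Empty.elim e) y)) := by
  intro n φ
  induction φ with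
  | falsum => exact ⟨0, fun x y _ => Iff.rfl⟩
  | @equal n t₁ t₂ =>
    refine ⟨1, fun x y hxy => ?_⟩
    have hbot : ∀ ε : Fin n → Bool, (cell x ε = ⊥ ↔ cell y ε = ⊥) := by
      intro ε
      constructor
      · intro h0
        by_contra hne
        exact (atLe_one_iff.1 ((hxy ε 1 le_rfl).2 (atLe_one_iff.2 hne))) h0
      · intro h0
        by_contra hne
        exact (atLe_one_iff.1 ((hxy ε 1 le_rfl).1 (atLe_one_iff.2 hne))) h0
    have hC : ((BoundedFormula.equal t₁ t₂).Realize (fun e => Empty.elim e) x) ↔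
        ((t₁.relabel (Sum.elim (fun e => Empty.elim e) id)).realize x =
          (t₂.relabel (Sum.elim (fun e => Empty.elim e) id)).realize x) := by
      show (t₁.realize (Sum.elim (fun e => Empty.elim e) x) =
        t₂.realize (Sum.elim (fun e => Empty.elim e) x)) ↔ _
      rw [realize_sum_elim, realize_sum_elim]
    have hD : ((BoundedFormula.equal t₁ t₂).Realize (fun e => Empty.elim e) y) ↔
        ((t₁.relabel (Sum.elim (fun e => Empty.elim e) id)).realize y =
          (t₂.relabel (Sum.elim (fun e => Empty.elim e) id)).realize y) := by
      show (t₁.realize (Sum.elim (fun e => Empty.elim e) y) =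
        t₂.realize (Sum.elim (fun e => Empty.elim e) y)) ↔ _
      rw [realize_sum_elim, realize_sum_elim]
    rw [hC, hD, term_eq_iff, term_eq_iff]
    constructor
    · intro h ε hne
      exact (hbot ε).1 (h ε hne)
    · intro h ε hne
      exact (hbot ε).2 (h ε hne)
  | rel R ts => exact Empty.elim R
  | imp φ ψ ih1 ih2 =>
    obtain ⟨N1, h1⟩ := ih1
    obtain ⟨N2, h2⟩ := ih2
    refine ⟨max N1 N2, fun x y hxy => ?_⟩
    simp only [BoundedFormula.realize_imp]
    rw [h1 x y (hxy.mono (le_max_left _ _)), h2 x y (hxy.mono (le_max_right _ _))]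
  | all φ ih =>
    obtain ⟨N, hN⟩ := ih
    refine ⟨2 * N + 2, fun x y hxy => ?_⟩
    simp only [BoundedFormula.realize_all]
    constructor
    · intro hx d
      obtain ⟨c, hc⟩ := ext_lemma hxy.symm d
      exact (hN _ _ hc.symm).1 (hx c)
    · intro hy c
      obtain ⟨d, hd⟩ := ext_lemma hxy c
      exact (hN _ _ hd).2 (hy d)

lemma realize_relabel_formula {β : Type*} [BooleanAlgebra β] {n : ℕ}
    (φ : boolLang.Formula (Fin n)) (z : Fin n → β) :
    ((BoundedFormula.relabel (Sum.inr : Fin n → Empty ⊕ Fin n) φ).Realize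
      (fun e => Empty.elim e) (z : Fin (n + 0) → β)) ↔ φ.Realize z := by
  rw [BoundedFormula.realize_relabel]
  have e1 : (Sum.elim (fun e => Empty.elim e) ((z : Fin (n + 0) → β) ∘ Fin.castAdd 0) ∘
      (Sum.inr : Fin n → Empty ⊕ Fin n)) = z := by
    funext i
    exact congrArg z (Fin.ext rfl)
  have e2 : ((z : Fin (n + 0) → β) ∘ Fin.natAdd n) = (default : Fin 0 → β) := by
    funext i
    exact i.elim0
  rw [e1, e2]
  exact Iff.rfl

theorem g_elementary {C : Type*} {D : Type*} [BooleanAlgebra C] [BooleanAlgebra D]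
    [IsAtomic C] [IsAtomic D] (g : C → D) (hinj : Function.Injective g)
    (hsup : ∀ x y, g (x ⊔ y) = g x ⊔ g y) (hinf : ∀ x y, g (x ⊓ y) = g x ⊓ g y)
    (hcompl : ∀ x, g xᶜ = (g x)ᶜ) (hbot : g ⊥ = ⊥) (htop : g ⊤ = ⊤)
    (hatom : ∀ a, IsAtom a → IsAtom (g a)) :
    ∀ {n : ℕ} (φ : boolLang.Formula (Fin n)) (x : Fin n → C),
      φ.Realize (g ∘ x) ↔ φ.Realize x := by
  classical
  have gmono : Monotone g := by
    intro a b hab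
    have h : g a ⊓ g b = g a := by rw [← hinf, inf_eq_left.2 hab]
    exact inf_eq_left.1 h
  have gsupF : ∀ (s : Finset C), g (s.sup id) = s.sup (fun a => g a) := by
    intro s
    induction s using Finset.cons_induction with
    | empty => simpa using hbot
    | cons a s ha ih => rw [Finset.sup_cons, Finset.sup_cons, hsup, ih]; rfl
  have ginfF : ∀ {k : ℕ} (f : Fin k → C), g (Finset.univ.inf f) =
      Finset.univ.inf (fun i => g (f i)) := by
    intro k f
    induction (Finset.univ : Finset (Fin k)) using Finset.cons_induction with
    | empty => simpa using htop
    | cons a s ha ih => rw [Finset.inf_cons, Finset.inf_cons, hinf, ih]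
  have gatLe : ∀ (m : ℕ) (c : C), atLe m c ↔ atLe m (g c) := by
    intro m c
    constructor
    · rintro ⟨s, hscard, hs⟩
      refine ⟨s.image g, ?_, ?_⟩
      · rw [Finset.card_image_of_injective _ hinj, hscard]
      · intro b hb
        obtain ⟨a, ha, rfl⟩ := Finset.mem_image.1 hb
        exact ⟨hatom a (hs a ha).1, gmono (hs a ha).2⟩
    · intro hgc
      by_contra hnc
      obtain ⟨k, hkle, hk, hks⟩ : ∃ k, k ≤ m ∧ atLe k c ∧ (k < m → ¬ atLe (k + 1) c) :=
        ⟨Nat.findGreatest (fun j => atLe j c) m, Nat.findGreatest_le _,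
          Nat.findGreatest_spec (P := fun j => atLe j c) (Nat.zero_le _) (atLe_zero _),
          fun hlt => Nat.findGreatest_is_greatest (Nat.lt_succ_self _) hlt⟩
      have hklt : k < m := lt_of_le_of_ne hkle (fun h => hnc (h ▸ hk))
      have hks' := hks hklt
      obtain ⟨s, hscard, hs⟩ := hk
      have hsupc : c = s.sup id := by
        apply le_antisymm ?_ (Finset.sup_le fun b hb => (hs b hb).2)
        by_contra hle
        have hne : c ⊓ (s.sup id)ᶜ ≠ ⊥ := fun hb =>
          hle (compl_compl (s.sup id) ▸ (disjoint_iff.2 hb).le_compl_right)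
        obtain ⟨a, ha, halle⟩ := (IsAtomic.eq_bot_or_exists_atom_le _).resolve_left hne
        have hanot : a ∉ s := fun hmem =>
          ha.1 (le_bot_iff.1 ((le_inf (halle.trans inf_le_right)
            (Finset.le_sup (f := id) hmem)).trans ((inf_comm _ _).trans_le inf_compl_eq_bot.le)))
        refine hks' ⟨insert a s, ?_, ?_⟩
        · rw [Finset.card_insert_of_notMem hanot, hscard]
        · intro b hb
          rcases Finset.mem_insert.1 hb with rfl | hbs
          · exact ⟨ha, halle.trans inf_le_left⟩
          · exact hs b hbs
      have h1 : g c = s.sup (fun a => g a) := by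
        conv_lhs => rw [hsupc]
        exact gsupF s
      have h2 : ∀ b, IsAtom b → b ≤ g c → b ∈ s.image g := by
        intro b hb hble
        have hsupeq : (s.image g).sup id = s.sup (fun a => g a) := Finset.sup_image s g id
        refine atom_mem_of_le_sup (s := s.image g) ?_ hb ?_
        · intro b' hb'
          obtain ⟨a, ha, rfl⟩ := Finset.mem_image.1 hb'
          exact hatom a (hs a ha).1
        · rw [hsupeq, ← h1]
          exact hble
      obtain ⟨t, htcard, ht⟩ := hgc.anti (show k + 1 ≤ m by omega)
      have hts : t ⊆ s.image g := fun b hb => h2 b (ht b hb).1 (ht b hb).2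
      have hcard := Finset.card_le_card hts
      rw [htcard, Finset.card_image_of_injective _ hinj, hscard] at hcard
      omega
  have gcell : ∀ {k : ℕ} (x : Fin k → C) (ε : Fin k → Bool),
      cell (g ∘ x) ε = g (cell x ε) := by
    intro k x ε
    unfold cell
    rw [ginfF]
    refine Finset.inf_congr rfl fun i _ => ?_
    cases ε i
    · simp only [cond]
      exact (hcompl (x i)).symm
    · rfl
  have gEqv : ∀ (N : ℕ) {k : ℕ} (x : Fin k → C), EqvAt N x (g ∘ x) := by
    intro N k x ε m _
    rw [gcell]
    exact gatLe m (cell x ε)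
  intro n φ x
  obtain ⟨N, hN⟩ := main_transfer (C := C) (D := D)
    (BoundedFormula.relabel (Sum.inr : Fin n → Empty ⊕ Fin n) φ)
  have key := hN x (g ∘ x) (gEqv N x)
  exact ((realize_relabel_formula φ (g ∘ x)).symm.trans key.symm).trans
    (realize_relabel_formula φ x)

end MainTransfer

section AtomFormula

/-- A first-order formula expressing that its (single) free variable is an atom. -/
def atomFla : boolLang.Formula (Fin 1) :=
  (Term.equal (Term.var (0 : Fin 1)) (Term.func botF Fin.elim0)).not ⊓
    BoundedFormula.all
      ((Term.bdEqual (Term.func infF ![Term.var (Sum.inl 0), Term.var (Sum.inr 0)])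
          (Term.var (Sum.inl 0))) ⊔
        (Term.bdEqual (Term.func infF ![Term.var (Sum.inl 0), Term.var (Sum.inr 0)])
          (Term.func botF Fin.elim0)))

lemma realize_atomFla {β : Type*} [BooleanAlgebra β] (v : Fin 1 → β) :
    atomFla.Realize v ↔ IsAtom (v 0) := by
  have hchar : IsAtom (v 0) ↔ (¬ v 0 = ⊥ ∧ ∀ b : β, v 0 ⊓ b = v 0 ∨ v 0 ⊓ b = ⊥) := by
    constructor
    · intro ha
      refine ⟨ha.1, fun b => ?_⟩
      rcases atom_le_or_le_compl ha b with h | h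
      · exact Or.inl (inf_eq_left.2 h)
      · exact Or.inr (le_bot_iff.1 ((inf_le_inf_right b h).trans compl_inf_eq_bot.le))
    · rintro ⟨hne, h⟩
      refine ⟨hne, fun b hb => ?_⟩
      rcases h b with h' | h'
      · exact absurd (lt_of_lt_of_le hb (inf_eq_left.1 h')) (lt_irrefl _)
      · rw [inf_eq_right.2 (le_of_lt hb)] at h'
        exact h'
  rw [hchar]
  simp only [atomFla, Formula.Realize, BoundedFormula.realize_inf, BoundedFormula.realize_not,
    BoundedFormula.realize_all, BoundedFormula.realize_sup, BoundedFormula.realize_bdEqual,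
    Term.equal, Term.realize_relabel, Term.realize_var, Term.realize_func,
    funMap_infF, funMap_botF]
  constructor
  · rintro ⟨h1, h2⟩
    refine ⟨by simpa using h1, fun b => ?_⟩
    have := h2 b
    simpa [Fin.snoc] using this
  · rintro ⟨h1, h2⟩
    refine ⟨by simpa using h1, fun b => ?_⟩
    simpa [Fin.snoc] using h2 b

end AtomFormula


/-- **Elementary embeddings of infinite atomic Boolean algebras.**
A map `g : C → D` between infinite atomic Boolean algebras is an elementary embedding
(w.r.t. the first-order language of Boolean algebras) if and only if it is an embedding
(injective and preserving `∨`, `∧`, `¬`, `⊥`, `⊤`) that maps atoms to atoms. -/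
theorem infinite_atomic_boolean_algebra_elementary_iff
    {C : Type u} {D : Type v} [BooleanAlgebra C] [BooleanAlgebra D]
    [Infinite C] [Infinite D] [IsAtomic C] [IsAtomic D] (g : C → D) :
    (∃ e : C ↪ₑ[boolLang] D, ⇑e = g) ↔
      (Function.Injective g ∧
        (∀ x y, g (x ⊔ y) = g x ⊔ g y) ∧
        (∀ x y, g (x ⊓ y) = g x ⊓ g y) ∧
        (∀ x, g xᶜ = (g x)ᶜ) ∧
        g ⊥ = ⊥ ∧ g ⊤ = ⊤ ∧
        ∀ a : C, IsAtom a → IsAtom (g a)) := by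
  constructor
  · rintro ⟨e, rfl⟩
    refine ⟨e.injective, fun x y => ?_, fun x y => ?_, fun x => ?_, ?_, ?_, fun a ha => ?_⟩
    · have h := e.map_fun (show boolLang.Functions 2 from true) ![x, y]
      rw [funMap_supF, funMap_supF] at h
      simpa using h
    · have h := e.map_fun (show boolLang.Functions 2 from false) ![x, y]
      rw [funMap_infF, funMap_infF] at h
      simpa using h
    · have h := e.map_fun (show boolLang.Functions 1 from Unit.unit) ![x]
      rw [funMap_complF, funMap_complF] at h
      simpa using h
    · have h := e.map_fun (show boolLang.Functions 0 from false) (default : Fin 0 → C)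
      rw [funMap_botF, funMap_botF] at h
      simpa using h
    · have h := e.map_fun (show boolLang.Functions 0 from true) (default : Fin 0 → C)
      rw [funMap_topF, funMap_topF] at h
      simpa using h
    · have h := e.map_formula atomFla ![a]
      rw [realize_atomFla, realize_atomFla] at h
      simpa using h.2 (by simpa using ha)
  · rintro ⟨hinj, hsup, hinf, hcompl, hbot, htop, hatom⟩
    exact ⟨⟨g, fun n φ x => g_elementary g hinj hsup hinf hcompl hbot htop hatom φ x⟩, rfl⟩

end TeamSem
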